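/- arXiv:2310.08131 — 2 statements merged into one kernel-verified Lean document; each statement's English description precedes it below -/
import Mathlib

section
/- Commutation of Pfaffian-type elements with generators, mixed case (Lemma 2-3(2)): Let p ≥ 0, N ≥ 3 with 2p+2 ≤ N, let I ∈ T_{2p+2}(N), and let 1 ≤ s,t ≤ N with s an entry of I and t not an entry of I. Write s = i_q (the q-th entry of I) and let J := I∪{t}∖{s} ∈ T_{2p+2}(N) (the increasing rearrangement after replacing s by t), with t = j_r the r-th entry of J. Then in U(𝔰𝔬(N,ℂ)) one has W̃_I·ι(X̃_{st}) = ι(X̃_{st})·W̃_I − (−1)^{q−r}·W̃_{I∪{t}∖{s}}. -/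
open scoped Classical Matrix

attribute [local instance] LieRing.ofAssociativeRing

noncomputable section

namespace SOC

/-- 𝔰𝔬(N,ℂ): skew-symmetric N×N complex matrices. -/
abbrev so (N : ℕ) : LieSubalgebra ℂ (Matrix (Fin N) (Fin N) ℂ) :=
  skewAdjointMatricesLieSubalgebra (1 : Matrix (Fin N) (Fin N) ℂ)

abbrev U (N : ℕ) := UniversalEnvelopingAlgebra ℂ (so N)

def ι {N : ℕ} (x : so N) : U N := UniversalEnvelopingAlgebra.ι ℂ x

lemma mem_so {N : ℕ} (A : Matrix (Fin N) (Fin N) ℂ) (h : Aᵀ = -A) : A ∈ so N := by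
  rw [mem_skewAdjointMatricesLieSubalgebra, mem_skewAdjointMatricesSubmodule]
  show Aᵀ * 1 = 1 * (-A)
  simp [h]

/-- X̃_{ij} = E_{ji} − E_{ij}. -/
def Xt {N : ℕ} (i j : Fin N) : so N :=
  ⟨Matrix.single j i 1 - Matrix.single i j 1, by
    apply mem_so
    ext a b
    simp [Matrix.single, Matrix.transpose_apply, and_comm]⟩

def pos0 {p : ℕ} (a : Fin p) : Fin (2*p) := ⟨2*a.1, by have := a.2; omega⟩
def pos1 {p : ℕ} (a : Fin p) : Fin (2*p) := ⟨2*a.1+1, by have := a.2; omega⟩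

/-- The set P₊(I) of admissible permutations. -/
def Pplus {N p : ℕ} (f : Fin (2*p) → Fin N) (π : Equiv.Perm (Fin (2*p))) : Prop :=
  (StrictMono fun a : Fin p => f (π (pos0 a))) ∧ ∀ a : Fin p, f (π (pos0 a)) < f (π (pos1 a))

/-- The Pfaffian-type element W̃ attached to a finset of cardinality 2p (and 0 otherwise). -/
def Wt (N p : ℕ) (s : Finset (Fin N)) : U N :=
  if h : s.card = 2*p then
    ∑ π : Equiv.Perm (Fin (2*p)),
      if Pplus (fun a => s.orderEmbOfFin h a) π then
        ((Equiv.Perm.sign π : ℤˣ) : ℤ) •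
          (List.ofFn fun a : Fin p =>
            ι (Xt (s.orderEmbOfFin h (π (pos0 a))) (s.orderEmbOfFin h (π (pos1 a))))).prod
      else 0
  else 0

/-- Ñ_l^q = X̃_{l,N+1−q} + √−1 X̃_{q,l} (0-indexed: N+1−q ↦ rev q). -/
def Ntl {N : ℕ} (q l : Fin N) : so N := Xt l q.rev + Complex.I • Xt q l

/-- ñ(0)_q. -/
def n0 (N : ℕ) (q : Fin N) : Submodule ℂ (so N) :=
  Submodule.span ℂ {x | ∃ l : Fin N, q < l ∧ l < q.rev ∧ x = Ntl q l}

/-- ñ(0)_q · U : finite sums of products ι(v)·u with v ∈ ñ(0)_q. -/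
def nU (N : ℕ) (q : Fin N) : Submodule ℂ (U N) :=
  Submodule.span ℂ {x | ∃ v ∈ n0 N q, ∃ u : U N, x = ι v * u}

/-- (ñ(0)_1 + ⋯ + ñ(0)_s) · U. -/
def nUs (N s : ℕ) : Submodule ℂ (U N) :=
  Submodule.span ℂ {x | ∃ q : Fin N, (q : ℕ) < s ∧ ∃ v ∈ n0 N q, ∃ u : U N, x = ι v * u}

/-- The central element W̃_p = Σ_{I ∈ T_{2p}(N)} W̃_I². -/
def Wc (N p : ℕ) : U N :=
  ∑ I ∈ Finset.univ.filter (fun I : Finset (Fin N) => I.card = 2*p), (Wt N p I)^2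

end SOC

section PfAux
open SOC Equiv Function List
set_option maxHeartbeats 1000000
set_option synthInstance.maxHeartbeats 400000

/-! ### Generic list-product lemmas in a ring -/

variable {R : Type*} [Ring R]

lemma update_comp_succ {α : Type*} {m : ℕ} (x : Fin (m+1) → α) (i : Fin m) (z : α) :
    Function.update x i.succ z ∘ Fin.succ = Function.update (x ∘ Fin.succ) i z :=
  Function.update_comp_eq_of_injective _ (Fin.succ_injective m) _ _

lemma update_zero_comp_succ {α : Type*} {m : ℕ} (x : Fin (m+1) → α) (z : α) :
    Function.update x 0 z ∘ Fin.succ = x ∘ Fin.succ := by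
  funext i
  simp [Function.update_of_ne (Fin.succ_ne_zero i)]

/-- Expansion of a commutator of a product with an element. -/
lemma prod_ofFn_comm_expand : ∀ (m : ℕ) (x : Fin m → R) (y : R),
    (List.ofFn x).prod * y - y * (List.ofFn x).prod
      = ∑ a : Fin m, (List.ofFn (Function.update x a (x a * y - y * x a))).prod := by
  intro m
  induction m with
  | zero => intro x y; simp
  | succ m ih =>
    intro x y
    have hexp : ∀ z : Fin (m+1) → R, (List.ofFn z).prod = z 0 * (List.ofFn (z ∘ Fin.succ)).prod := by
      intro z; rw [List.ofFn_succ, List.prod_cons]; rfl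
    rw [Fin.sum_univ_succ]
    have h0 : (List.ofFn (Function.update x 0 (x 0 * y - y * x 0))).prod
        = (x 0 * y - y * x 0) * (List.ofFn (x ∘ Fin.succ)).prod := by
      rw [hexp, Function.update_self, update_zero_comp_succ]
    have hs : ∀ i : Fin m, (List.ofFn (Function.update x i.succ (x i.succ * y - y * x i.succ))).prod
        = x 0 * (List.ofFn (Function.update (x ∘ Fin.succ) i
            ((x ∘ Fin.succ) i * y - y * (x ∘ Fin.succ) i))).prod := by
      intro i
      rw [hexp, Function.update_of_ne (Fin.succ_ne_zero i).symm, update_comp_succ]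
      rfl
    simp only [h0, hs]
    rw [← Finset.mul_sum, ← ih (x ∘ Fin.succ) y, hexp x]
    noncomm_ring

/-- Pulling integer scalars out of a product. -/
lemma prod_ofFn_zsmul : ∀ (m : ℕ) (c : Fin m → ℤ) (x : Fin m → R),
    (List.ofFn fun a => c a • x a).prod = (∏ a, c a) • (List.ofFn x).prod := by
  intro m
  induction m with
  | zero => intro c x; simp
  | succ m ih =>
    intro c x
    rw [List.ofFn_succ, List.ofFn_succ, List.prod_cons, List.prod_cons, Fin.prod_univ_succ]
    have := ih (c ∘ Fin.succ) (x ∘ Fin.succ)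
    simp only [Function.comp_def] at this ⊢
    rw [this, smul_mul_assoc, mul_smul_comm, smul_smul]

lemma prod_ofFn_update_neg {m : ℕ} (x : Fin m → R) (a : Fin m) (z : R) :
    (List.ofFn (Function.update x a (-z))).prod = - (List.ofFn (Function.update x a z)).prod := by
  have h1 : (Function.update x a (-z)) = fun i => (if i = a then (-1 : ℤ) else 1) • Function.update x a z i := by
    funext i
    by_cases hi : i = a
    · subst hi; simp
    · simp [Function.update_of_ne hi, hi]
  have h2 : (∏ i : Fin m, if i = a then (-1 : ℤ) else 1) = -1 := by
    rw [Finset.prod_ite_eq' Finset.univ a (fun _ => (-1 : ℤ))]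
    simp
  rw [h1, prod_ofFn_zsmul, h2]
  simp

/-- Reordering a product of pairwise-commuting factors. -/
lemma prod_ofFn_comp_perm {m : ℕ} (x : Fin m → R) (τ : Equiv.Perm (Fin m))
    (hc : ∀ i j, Commute (x i) (x j)) :
    (List.ofFn (x ∘ τ)).prod = (List.ofFn x).prod := by
  refine (τ.ofFn_comp_perm x).prod_eq' ?_
  rw [List.pairwise_ofFn]
  intro i j _
  exact hc _ _

/-! ### Lie algebra computations -/

variable {N : ℕ}

lemma iota_bracket (x y : so N) : ι x * ι y - ι y * ι x = ι ⁅x, y⁆ := by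
  show _ = UniversalEnvelopingAlgebra.ι ℂ ⁅x, y⁆
  rw [LieHom.map_lie, Ring.lie_def]
  rfl

lemma Xt_antisymm (i j : Fin N) : Xt j i = - Xt i j := by
  apply Subtype.ext
  show _ = -(((Xt i j) : Matrix (Fin N) (Fin N) ℂ))
  simp only [Xt]
  abel

lemma coe_bracket_so (x y : so N) :
    ((⁅x, y⁆ : so N) : Matrix (Fin N) (Fin N) ℂ) = (x : Matrix (Fin N) (Fin N) ℂ) * y - y * x := by
  rw [LieSubalgebra.coe_bracket, Ring.lie_def]

lemma bracket_Xt_disj {i j k l : Fin N} (h1 : i ≠ k) (h2 : i ≠ l) (h3 : j ≠ k) (h4 : j ≠ l) :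
    ⁅(Xt i j : so N), Xt k l⁆ = 0 := by
  apply Subtype.ext
  rw [coe_bracket_so, ZeroMemClass.coe_zero]
  show (Matrix.single j i (1:ℂ) - Matrix.single i j (1:ℂ)) *
        (Matrix.single l k (1:ℂ) - Matrix.single k l (1:ℂ)) -
      (Matrix.single l k (1:ℂ) - Matrix.single k l (1:ℂ)) *
        (Matrix.single j i (1:ℂ) - Matrix.single i j (1:ℂ)) = 0
  simp only [sub_mul, mul_sub]
  simp [Matrix.single_mul_single_of_ne, h1, h2, h3, h4, h1.symm, h2.symm, h3.symm, h4.symm]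

lemma bracket_Xt_right {s u t : Fin N} (hus : u ≠ s) (hut : u ≠ t) (hst : s ≠ t) :
    ⁅(Xt u s : so N), Xt s t⁆ = - Xt u t := by
  apply Subtype.ext
  rw [coe_bracket_so]
  have e1 : ((- Xt u t : so N) : Matrix (Fin N) (Fin N) ℂ)
      = -(Matrix.single t u (1:ℂ) - Matrix.single u t (1:ℂ)) := by
    rw [NegMemClass.coe_neg]
    rfl
  rw [e1]
  show (Matrix.single s u (1:ℂ) - Matrix.single u s (1:ℂ)) *
        (Matrix.single t s (1:ℂ) - Matrix.single s t (1:ℂ)) -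
      (Matrix.single t s (1:ℂ) - Matrix.single s t (1:ℂ)) *
        (Matrix.single s u (1:ℂ) - Matrix.single u s (1:ℂ))
      = -(Matrix.single t u (1:ℂ) - Matrix.single u t (1:ℂ))
  simp only [sub_mul, mul_sub]
  simp [Matrix.single_mul_single_of_ne, Matrix.single_mul_single_same, one_mul,
    hus, hut, hst, hus.symm, hut.symm, hst.symm]

lemma bracket_Xt_left {s u t : Fin N} (hus : u ≠ s) (hut : u ≠ t) (hst : s ≠ t) :
    ⁅(Xt s u : so N), Xt s t⁆ = Xt u t := by
  have : ⁅(Xt s u : so N), Xt s t⁆ = ⁅(-(Xt u s) : so N), Xt s t⁆ := by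
    rw [← Xt_antisymm]
  rw [this, neg_lie, bracket_Xt_right hus hut hst, neg_neg]


/-! ### Pfaffian terms -/

def termProd {N m : ℕ} (f : Fin (2*m) → Fin N) (π : Equiv.Perm (Fin (2*m))) : U N :=
  (List.ofFn fun a : Fin m => ι (Xt (f (π (pos0 a))) (f (π (pos1 a))))).prod

def Fterm {N m : ℕ} (f : Fin (2*m) → Fin N) (π : Equiv.Perm (Fin (2*m))) : U N :=
  ((Equiv.Perm.sign π : ℤˣ) : ℤ) • termProd f π

def Vt {N m : ℕ} (f : Fin (2*m) → Fin N) : U N := ∑ π : Equiv.Perm (Fin (2*m)), Fterm f π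

lemma Wt_eq {N m : ℕ} (S : Finset (Fin N)) (h : S.card = 2*m) :
    Wt N m S = ∑ π ∈ Finset.univ.filter (Pplus (fun a => S.orderEmbOfFin h a)),
      Fterm (fun a => S.orderEmbOfFin h a) π := by
  rw [Wt, dif_pos h, Finset.sum_filter]
  rfl

/-! ### positions -/

lemma pos0_injective {m : ℕ} : Function.Injective (pos0 (p := m)) := by
  intro a b h
  have := congrArg Fin.val h
  simp only [pos0] at this
  exact Fin.ext (by omega)

lemma pos1_injective {m : ℕ} : Function.Injective (pos1 (p := m)) := by
  intro a b h
  have := congrArg Fin.val h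
  simp only [pos1] at this
  exact Fin.ext (by omega)

lemma pos0_ne_pos1 {m : ℕ} (a b : Fin m) : pos0 a ≠ pos1 b := by
  intro h
  have := congrArg Fin.val h
  simp only [pos0, pos1] at this
  omega

lemma pos_cases {m : ℕ} (x : Fin (2*m)) : ∃ a : Fin m, x = pos0 a ∨ x = pos1 a := by
  refine ⟨⟨x.1/2, by have := x.2; omega⟩, ?_⟩
  rcases Nat.even_or_odd x.1 with he | ho
  · exact Or.inl (Fin.ext (by simp only [pos0]; obtain ⟨c, hc⟩ := he; omega))
  · exact Or.inr (Fin.ext (by simp only [pos1]; obtain ⟨c, hc⟩ := ho; omega))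

/-! ### Commutation -/

lemma iotaZero {N : ℕ} : ι (0 : so N) = 0 :=
  map_zero (UniversalEnvelopingAlgebra.ι ℂ)

lemma iotaNeg {N : ℕ} (x : so N) : ι (-x) = - ι x :=
  map_neg (UniversalEnvelopingAlgebra.ι ℂ) x

lemma termProd_comm {N m : ℕ} (f : Fin (2*m) → Fin N) (hf : Function.Injective f)
    (q : Fin (2*m)) (t : Fin N) (ht : ∀ x, f x ≠ t) (π : Equiv.Perm (Fin (2*m))) :
    termProd f π * ι (Xt (f q) t) - ι (Xt (f q) t) * termProd f π
      = - termProd (Function.update f q t) π := by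
  set y : U N := ι (Xt (f q) t) with hy
  set x : Fin m → U N := fun a => ι (Xt (f (π (pos0 a))) (f (π (pos1 a)))) with hx
  set g : Fin (2*m) → Fin N := Function.update f q t with hg
  have hgq : g q = t := Function.update_self _ _ _
  have hgne : ∀ z : Fin (2*m), z ≠ q → g z = f z := fun z hz => Function.update_of_ne hz _ _
  obtain ⟨a0, hcase⟩ := pos_cases (π.symm q)
  -- facts about non-a0 pairs
  have h0 : ∀ z : Fin (2*m), π z = q → z = π.symm q := by
    intro z hz
    rw [← hz, Equiv.symm_apply_apply]
  have hnq : ∀ b : Fin m, b ≠ a0 → π (pos0 b) ≠ q ∧ π (pos1 b) ≠ q := by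
    intro b hb
    constructor
    · intro h
      rcases hcase with hc | hc
      · exact hb (pos0_injective ((h0 _ h).trans hc))
      · exact pos0_ne_pos1 b a0 ((h0 _ h).trans hc)
    · intro h
      rcases hcase with hc | hc
      · exact pos0_ne_pos1 a0 b ((h0 _ h).trans hc).symm
      · exact hb (pos1_injective ((h0 _ h).trans hc))
  show (List.ofFn x).prod * y - y * (List.ofFn x).prod = - termProd g π
  rw [prod_ofFn_comm_expand]
  rw [Finset.sum_eq_single a0]
  rotate_left
  · -- other terms vanish
    intro b _ hb
    have hz : x b * y - y * x b = 0 := by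
      simp only [hx, hy]
      rw [iota_bracket,
        bracket_Xt_disj (hf.ne (hnq b hb).1) (ht _) (hf.ne (hnq b hb).2) (ht _), iotaZero]
    rw [hz]
    apply List.prod_eq_zero
    rw [List.mem_ofFn]
    exact ⟨b, Function.update_self _ _ _⟩
  · intro h
    exact absurd (Finset.mem_univ a0) h
  · -- the a0 term
    have hupdate : Function.update x a0 (ι (Xt (g (π (pos0 a0))) (g (π (pos1 a0)))))
        = fun a => ι (Xt (g (π (pos0 a))) (g (π (pos1 a)))) := by
      funext a
      by_cases ha : a = a0
      · subst ha; exact Function.update_self _ _ _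
      · rw [Function.update_of_ne ha, hx]
        simp only
        rw [hgne _ (hnq a ha).1, hgne _ (hnq a ha).2]
    have hbr : x a0 * y - y * x a0 = -(ι (Xt (g (π (pos0 a0))) (g (π (pos1 a0))))) := by
      rcases hcase with hc | hc
      · -- π (pos0 a0) = q
        have hq0 : π (pos0 a0) = q := by rw [← hc, Equiv.apply_symm_apply]
        have hne1 : π (pos1 a0) ≠ q := by
          intro h
          exact pos0_ne_pos1 a0 a0 (π.injective (hq0.trans h.symm))
        simp only [hx, hy]
        rw [iota_bracket, hq0, hgq, hgne _ hne1]
        rw [bracket_Xt_left (hf.ne hne1) (ht _) (ht _)]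
        rw [Xt_antisymm t (f (π (pos1 a0))), iotaNeg]
      · -- π (pos1 a0) = q
        have hq1 : π (pos1 a0) = q := by rw [← hc, Equiv.apply_symm_apply]
        have hne0 : π (pos0 a0) ≠ q := by
          intro h
          exact pos0_ne_pos1 a0 a0 (π.injective (h.trans hq1.symm))
        simp only [hx, hy]
        rw [iota_bracket, hq1, hgq, hgne _ hne0]
        rw [bracket_Xt_right (hf.ne hne0) (ht _) (ht _)]
        rw [iotaNeg]
    rw [hbr, prod_ofFn_update_neg, hupdate]
    rfl

lemma Vt_comm {N m : ℕ} (f : Fin (2*m) → Fin N) (hf : Function.Injective f)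
    (q : Fin (2*m)) (t : Fin N) (ht : ∀ x, f x ≠ t) :
    Vt f * ι (Xt (f q) t) - ι (Xt (f q) t) * Vt f = - Vt (Function.update f q t) := by
  rw [Vt, Vt, Finset.sum_mul, Finset.mul_sum, ← Finset.sum_sub_distrib, ← Finset.sum_neg_distrib]
  refine Finset.sum_congr rfl fun π _ => ?_
  rw [Fterm, Fterm, smul_mul_assoc, mul_smul_comm, ← smul_sub,
    termProd_comm f hf q t ht π, smul_neg]

lemma Vt_comp_perm {N m : ℕ} (f : Fin (2*m) → Fin N) (c : Equiv.Perm (Fin (2*m))) :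
    Vt (f ∘ c) = ((Equiv.Perm.sign c : ℤˣ) : ℤ) • Vt f := by
  rw [Vt, Vt, Finset.smul_sum]
  refine Fintype.sum_equiv (Equiv.mulLeft c) _ _ ?_
  intro π
  have h1 : termProd (f ∘ c) π = termProd f (c * π) := rfl
  simp only [Equiv.coe_mulLeft]
  rw [Fterm, Fterm, h1, smul_smul]
  congr 1
  rw [map_mul]
  rcases Int.units_eq_one_or (Equiv.Perm.sign c) with h | h <;>
    rcases Int.units_eq_one_or (Equiv.Perm.sign π) with h2 | h2 <;>
      rw [h, h2] <;> simp


/-! ### The hyperoctahedral action -/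

lemma e2_bij {m : ℕ} : Function.Bijective
    (fun x : Fin m × Bool => cond x.2 (pos1 x.1) (pos0 x.1)) := by
  rw [Fintype.bijective_iff_injective_and_card]
  constructor
  · rintro ⟨a, b⟩ ⟨c, d⟩ h
    simp only at h
    cases b <;> cases d <;> simp only [Bool.cond_false, Bool.cond_true] at h
    · rw [pos0_injective h]
    · exact absurd h (pos0_ne_pos1 a c)
    · exact absurd h.symm (pos0_ne_pos1 c a)
    · rw [pos1_injective h]
  · simp [Fintype.card_prod, mul_comm]

def e2 {m : ℕ} : Fin m × Bool ≃ Fin (2*m) := Equiv.ofBijective _ e2_bij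

lemma e2_false {m : ℕ} (a : Fin m) : e2 (a, false) = pos0 a := rfl
lemma e2_true {m : ℕ} (a : Fin m) : e2 (a, true) = pos1 a := rfl
lemma e2_symm_pos0 {m : ℕ} (a : Fin m) : e2.symm (pos0 a) = (a, false) := by
  rw [Equiv.symm_apply_eq]; rfl
lemma e2_symm_pos1 {m : ℕ} (a : Fin m) : e2.symm (pos1 a) = (a, true) := by
  rw [Equiv.symm_apply_eq]; rfl

def boolFlip : Equiv.Perm Bool := Equiv.swap false true

lemma boolFlip_apply (b : Bool) : boolFlip b = !b := by
  cases b
  · exact Equiv.swap_apply_left false true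
  · exact Equiv.swap_apply_right false true

def flipPart {m : ℕ} (s : Finset (Fin m)) : Equiv.Perm (Fin m × Bool) :=
  Equiv.prodCongrRight (fun a => if a ∈ s then boolFlip else Equiv.refl Bool)

lemma flipPart_apply {m : ℕ} (s : Finset (Fin m)) (x : Fin m × Bool) :
    flipPart s x = (x.1, if x.1 ∈ s then !x.2 else x.2) := by
  rcases x with ⟨a, b⟩
  rw [flipPart, Equiv.prodCongrRight_apply]
  by_cases h : a ∈ s <;> simp [h, boolFlip_apply]

def tauPart {m : ℕ} (τ : Equiv.Perm (Fin m)) : Equiv.Perm (Fin m × Bool) :=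
  (Equiv.prodComm Bool (Fin m)).permCongr (Equiv.prodCongrRight (fun _ : Bool => τ))

lemma tauPart_apply {m : ℕ} (τ : Equiv.Perm (Fin m)) (x : Fin m × Bool) :
    tauPart τ x = (τ x.1, x.2) := rfl

lemma sign_flipPart {m : ℕ} (s : Finset (Fin m)) :
    Equiv.Perm.sign (flipPart s) = (-1)^s.card := by
  rw [flipPart, Equiv.Perm.sign_prodCongrRight]
  calc (∏ a, Equiv.Perm.sign (if a ∈ s then boolFlip else Equiv.refl Bool))
      = ∏ a, (if a ∈ s then (-1 : ℤˣ) else 1) := by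
        refine Finset.prod_congr rfl fun a _ => ?_
        split_ifs
        · exact Equiv.Perm.sign_swap (by decide)
        · simp
    _ = ∏ a ∈ Finset.univ ∩ s, (-1 : ℤˣ) := Finset.prod_ite_mem _ _ _
    _ = (-1)^s.card := by rw [Finset.univ_inter]; exact Finset.prod_const _

lemma sign_tauPart {m : ℕ} (τ : Equiv.Perm (Fin m)) :
    Equiv.Perm.sign (tauPart τ) = 1 := by
  rw [tauPart, Equiv.Perm.sign_permCongr, Equiv.Perm.sign_prodCongrRight]
  rw [Finset.prod_const, Finset.card_univ, Fintype.card_bool]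
  exact Int.units_sq _

def theta {m : ℕ} (s : Finset (Fin m)) (τ : Equiv.Perm (Fin m)) : Equiv.Perm (Fin (2*m)) :=
  e2.permCongr (tauPart τ * flipPart s)

lemma theta_pos0 {m : ℕ} (s : Finset (Fin m)) (τ : Equiv.Perm (Fin m)) (a : Fin m) :
    theta s τ (pos0 a) = if a ∈ s then pos1 (τ a) else pos0 (τ a) := by
  rw [theta, Equiv.permCongr_apply, e2_symm_pos0, Equiv.Perm.mul_apply, flipPart_apply]
  by_cases h : a ∈ s
  · simp only [h, if_true]
    rw [show ((a, !false) : Fin m × Bool) = (a, true) from rfl, tauPart_apply]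
    exact e2_true (τ a)
  · simp only [h, if_false]
    rw [tauPart_apply]
    exact e2_false (τ a)

lemma theta_pos1 {m : ℕ} (s : Finset (Fin m)) (τ : Equiv.Perm (Fin m)) (a : Fin m) :
    theta s τ (pos1 a) = if a ∈ s then pos0 (τ a) else pos1 (τ a) := by
  rw [theta, Equiv.permCongr_apply, e2_symm_pos1, Equiv.Perm.mul_apply, flipPart_apply]
  by_cases h : a ∈ s
  · simp only [h, if_true]
    rw [show ((a, !true) : Fin m × Bool) = (a, false) from rfl, tauPart_apply]
    exact e2_false (τ a)
  · simp only [h, if_false]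
    rw [tauPart_apply]
    exact e2_true (τ a)

lemma sign_theta {m : ℕ} (s : Finset (Fin m)) (τ : Equiv.Perm (Fin m)) :
    Equiv.Perm.sign (theta s τ) = (-1)^s.card := by
  rw [theta, Equiv.Perm.sign_permCongr, map_mul, sign_tauPart, sign_flipPart, one_mul]

/-! ### Invariance of Fterm under the action -/

lemma commute_factors {N m : ℕ} (f : Fin (2*m) → Fin N) (hf : Function.Injective f)
    (π : Equiv.Perm (Fin (2*m))) (i j : Fin m) :
    Commute (ι (Xt (f (π (pos0 i))) (f (π (pos1 i))))) (ι (Xt (f (π (pos0 j))) (f (π (pos1 j))))) := by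
  by_cases hij : i = j
  · subst hij; exact Commute.refl _
  · have hfp : ∀ x z : Fin (2*m), x ≠ z → f (π x) ≠ f (π z) := fun x z h =>
      hf.ne (π.injective.ne h)
    have h := iota_bracket (Xt (f (π (pos0 i))) (f (π (pos1 i))))
      (Xt (f (π (pos0 j))) (f (π (pos1 j))))
    rw [bracket_Xt_disj (hfp _ _ (fun hh => hij (pos0_injective hh)))
        (hfp _ _ (pos0_ne_pos1 i j))
        (hfp _ _ (Ne.symm (pos0_ne_pos1 j i)))
        (hfp _ _ (fun hh => hij (pos1_injective hh))), iotaZero] at h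
    exact sub_eq_zero.mp h

lemma Fterm_mul_theta {N m : ℕ} (f : Fin (2*m) → Fin N) (hf : Function.Injective f)
    (π : Equiv.Perm (Fin (2*m))) (s : Finset (Fin m)) (τ : Equiv.Perm (Fin m)) :
    Fterm f (π * theta s τ) = Fterm f π := by
  set v : Fin m → U N := fun a => ι (Xt (f (π (pos0 a))) (f (π (pos1 a)))) with hv
  have hterm : termProd f (π * theta s τ)
      = (∏ a : Fin m, if a ∈ s then (-1 : ℤ) else 1) • termProd f π := by
    rw [termProd, termProd]
    have hentry : (fun a : Fin m => ι (Xt (f ((π * theta s τ) (pos0 a))) (f ((π * theta s τ) (pos1 a)))))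
        = fun a => (if a ∈ s then (-1 : ℤ) else 1) • (v ∘ τ) a := by
      funext a
      rw [Equiv.Perm.mul_apply, Equiv.Perm.mul_apply, theta_pos0, theta_pos1]
      by_cases h : a ∈ s
      · simp only [h, if_true, Function.comp_apply, hv]
        rw [Xt_antisymm (f (π (pos0 (τ a)))) (f (π (pos1 (τ a)))), iotaNeg, neg_smul, one_smul]
      · simp only [h, if_false, Function.comp_apply, hv, one_smul]
    rw [hentry, prod_ofFn_zsmul]
    congr 1
    exact prod_ofFn_comp_perm v τ (fun i j => commute_factors f hf π i j)
  have hprodsign : (∏ a : Fin m, if a ∈ s then (-1 : ℤ) else 1) = (-1 : ℤ)^s.card := by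
    rw [Finset.prod_ite_mem _ _ _, Finset.univ_inter, Finset.prod_const]
  rw [Fterm, Fterm, hterm, smul_smul]
  congr 1
  rw [hprodsign, map_mul, sign_theta]
  rw [Units.val_mul]
  rw [show (((-1 : ℤˣ)^s.card : ℤˣ) : ℤ) = (-1 : ℤ)^s.card by
    rw [Units.val_pow_eq_pow_val]; rfl]
  rw [mul_assoc, ← mul_pow]
  norm_num

/-! ### mins and flips -/

def mins {N m : ℕ} (f : Fin (2*m) → Fin N) (π : Equiv.Perm (Fin (2*m))) (a : Fin m) : Fin N :=
  min (f (π (pos0 a))) (f (π (pos1 a)))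

def flips {N m : ℕ} (f : Fin (2*m) → Fin N) (π : Equiv.Perm (Fin (2*m))) : Finset (Fin m) :=
  Finset.univ.filter (fun a => f (π (pos1 a)) < f (π (pos0 a)))

lemma mins_injective {N m : ℕ} {f : Fin (2*m) → Fin N} (hf : Function.Injective f)
    (π : Equiv.Perm (Fin (2*m))) : Function.Injective (mins f π) := by
  intro a b h
  have hc : ∀ c : Fin m, mins f π c = f (π (pos0 c)) ∨ mins f π c = f (π (pos1 c)) :=
    fun c => min_choice _ _
  have key : ∀ x z : Fin (2*m), f (π x) = f (π z) → x = z := fun x z hh =>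
    π.injective (hf hh)
  rcases hc a with h1 | h1 <;> rcases hc b with h2 | h2 <;>
    rw [h1, h2] at h
  · exact pos0_injective (key _ _ h)
  · exact absurd (key _ _ h) (pos0_ne_pos1 a b)
  · exact absurd (key _ _ h).symm (pos0_ne_pos1 b a)
  · exact pos1_injective (key _ _ h)

lemma mins_mul_theta {N m : ℕ} (f : Fin (2*m) → Fin N) (π : Equiv.Perm (Fin (2*m)))
    (s : Finset (Fin m)) (τ : Equiv.Perm (Fin m)) (a : Fin m) :
    mins f (π * theta s τ) a = mins f π (τ a) := by
  rw [mins, mins, Equiv.Perm.mul_apply, Equiv.Perm.mul_apply, theta_pos0, theta_pos1]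
  by_cases h : a ∈ s <;> simp only [h, if_true, if_false]
  · exact min_comm _ _

lemma flips_mul_theta {N m : ℕ} (f : Fin (2*m) → Fin N) {π₀ : Equiv.Perm (Fin (2*m))}
    (h₀ : Pplus f π₀) (s : Finset (Fin m)) (τ : Equiv.Perm (Fin m)) :
    flips f (π₀ * theta s τ) = s := by
  ext a
  rw [flips, Finset.mem_filter]
  simp only [Finset.mem_univ, true_and, Equiv.Perm.mul_apply, theta_pos0, theta_pos1]
  by_cases h : a ∈ s <;> simp only [h, if_true, if_false]
  · exact iff_of_true (h₀.2 (τ a)) trivial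
  · exact iff_of_false (not_lt.mpr (le_of_lt (h₀.2 (τ a)))) not_false

lemma Pplus_mins {N m : ℕ} {f : Fin (2*m) → Fin N} {π₀ : Equiv.Perm (Fin (2*m))}
    (h₀ : Pplus f π₀) : mins f π₀ = fun a => f (π₀ (pos0 a)) :=
  funext fun a => min_eq_left (le_of_lt (h₀.2 a))

lemma image_comp_perm {m : ℕ} {α : Type*} [DecidableEq α] (g : Fin m → α) (τ : Equiv.Perm (Fin m)) :
    Finset.image (fun a => g (τ a)) Finset.univ = Finset.image g Finset.univ := by
  ext x
  simp only [Finset.mem_image, Finset.mem_univ, true_and]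
  constructor
  · rintro ⟨a, h⟩; exact ⟨τ a, h⟩
  · rintro ⟨a, h⟩; exact ⟨τ.symm a, by rwa [Equiv.apply_symm_apply]⟩

/-! ### The decomposition bijection -/

lemma decomp_bijective {N m : ℕ} (f : Fin (2*m) → Fin N) (hf : Function.Injective f) :
    Function.Bijective (fun x : {π : Equiv.Perm (Fin (2*m)) // Pplus f π} ×
        (Finset (Fin m) × Equiv.Perm (Fin m)) => x.1.1 * theta x.2.1 x.2.2) := by
  constructor
  · rintro ⟨⟨π₀, h₀⟩, s, τ⟩ ⟨⟨π₁, h₁⟩, s', τ'⟩ h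
    simp only at h
    have hs : s = s' := by
      rw [← flips_mul_theta f h₀ s τ, h, flips_mul_theta f h₁ s' τ']
    have hm : ∀ a, mins f π₀ (τ a) = mins f π₁ (τ' a) := by
      intro a
      rw [← mins_mul_theta f π₀ s τ a, h, mins_mul_theta f π₁ s' τ' a]
    -- both mins are the order embedding of the common image
    set T : Finset (Fin N) := Finset.image (mins f π₀) Finset.univ with hTdef
    have hT : T.card = m := by
      rw [hTdef, Finset.card_image_of_injective _ (mins_injective hf π₀),
        Finset.card_univ, Fintype.card_fin]
    have himg : Finset.image (mins f π₁) Finset.univ = T := by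
      rw [hTdef, ← image_comp_perm (mins f π₀) τ, ← image_comp_perm (mins f π₁) τ']
      exact (Finset.image_congr (fun a _ => (hm a).symm)).symm ▸ rfl
    have hmono0 : StrictMono (mins f π₀) := by
      rw [Pplus_mins h₀]; exact h₀.1
    have hmono1 : StrictMono (mins f π₁) := by
      rw [Pplus_mins h₁]; exact h₁.1
    have he0 : mins f π₀ = fun i => T.orderEmbOfFin hT i :=
      Finset.orderEmbOfFin_unique hT
        (fun x => Finset.mem_image_of_mem _ (Finset.mem_univ x)) hmono0
    have he1 : mins f π₁ = fun i => T.orderEmbOfFin hT i :=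
      Finset.orderEmbOfFin_unique hT
        (fun x => by rw [← himg]; exact Finset.mem_image_of_mem _ (Finset.mem_univ x)) hmono1
    have hmins : mins f π₀ = mins f π₁ := he0.trans he1.symm
    have hτ : τ = τ' := by
      apply Equiv.ext
      intro a
      apply mins_injective hf π₀
      rw [hm a, hmins]
    have hπ : π₀ = π₁ := by
      have := h
      rw [hs, hτ] at this
      exact mul_right_cancel this
    rw [Prod.ext_iff]
    exact ⟨Subtype.ext hπ, by rw [Prod.ext_iff]; exact ⟨hs, hτ⟩⟩
  · intro π
    classical
    set s : Finset (Fin m) := flips f π with hsdef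
    set T : Finset (Fin N) := Finset.image (mins f π) Finset.univ with hTdef
    have hT : T.card = m := by
      rw [hTdef, Finset.card_image_of_injective _ (mins_injective hf π),
        Finset.card_univ, Fintype.card_fin]
    have hmem : ∀ a, mins f π a ∈ T := fun a =>
      Finset.mem_image_of_mem _ (Finset.mem_univ a)
    set τfun : Fin m → Fin m := fun a => (T.orderIsoOfFin hT).symm ⟨mins f π a, hmem a⟩ with hτdef
    have hM : ∀ a, T.orderEmbOfFin hT (τfun a) = mins f π a := by
      intro a
      rw [hτdef]
      rw [← Finset.coe_orderIsoOfFin_apply]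
      exact congrArg Subtype.val ((T.orderIsoOfFin hT).apply_symm_apply ⟨mins f π a, hmem a⟩)
    have hτinj : Function.Injective τfun := by
      intro a b hab
      apply mins_injective hf π
      rw [← hM a, ← hM b, hab]
    have hτbij : Function.Bijective τfun := (Finite.injective_iff_bijective).mp hτinj
    set τ : Equiv.Perm (Fin m) := Equiv.ofBijective τfun hτbij with hτeq
    have hτapp : ∀ a, τ a = τfun a := fun a => rfl
    set π₀ : Equiv.Perm (Fin (2*m)) := π * (theta s τ)⁻¹ with hπ₀
    -- evaluations of theta⁻¹
    have hinv0 : ∀ a : Fin m, (theta s τ)⁻¹ (pos0 a)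
        = if τ.symm a ∈ s then pos1 (τ.symm a) else pos0 (τ.symm a) := by
      intro a
      rw [Equiv.Perm.inv_def, Equiv.symm_apply_eq]
      by_cases h : τ.symm a ∈ s
      · rw [if_pos h, theta_pos1, if_pos h, Equiv.apply_symm_apply]
      · rw [if_neg h, theta_pos0, if_neg h, Equiv.apply_symm_apply]
    have hinv1 : ∀ a : Fin m, (theta s τ)⁻¹ (pos1 a)
        = if τ.symm a ∈ s then pos0 (τ.symm a) else pos1 (τ.symm a) := by
      intro a
      rw [Equiv.Perm.inv_def, Equiv.symm_apply_eq]
      by_cases h : τ.symm a ∈ s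
      · rw [if_pos h, theta_pos0, if_pos h, Equiv.apply_symm_apply]
      · rw [if_neg h, theta_pos1, if_neg h, Equiv.apply_symm_apply]
    have hval0 : ∀ a : Fin m, f (π₀ (pos0 a)) = T.orderEmbOfFin hT a := by
      intro a
      rw [hπ₀, Equiv.Perm.mul_apply, hinv0 a]
      have : mins f π (τ.symm a) = T.orderEmbOfFin hT a := by
        rw [← hM (τ.symm a)]
        congr 1
        exact congrArg τfun rfl |>.symm ▸ (by rw [← hτapp, Equiv.apply_symm_apply])
      by_cases h : τ.symm a ∈ s
      · rw [if_pos h, ← this, mins]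
        have hlt : f (π (pos1 (τ.symm a))) < f (π (pos0 (τ.symm a))) := by
          have := h
          rw [hsdef, flips, Finset.mem_filter] at this
          exact this.2
        rw [min_eq_right (le_of_lt hlt)]
      · rw [if_neg h, ← this, mins]
        have hle : f (π (pos0 (τ.symm a))) ≤ f (π (pos1 (τ.symm a))) := by
          have := h
          rw [hsdef, flips, Finset.mem_filter] at this
          push_neg at this
          exact this (Finset.mem_univ _)
        rw [min_eq_left hle]
    have hpair_ne : ∀ b : Fin m, f (π (pos0 b)) ≠ f (π (pos1 b)) := fun b =>
      hf.ne (π.injective.ne (pos0_ne_pos1 b b))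
    have hval1 : ∀ a : Fin m, T.orderEmbOfFin hT a < f (π₀ (pos1 a)) := by
      intro a
      rw [hπ₀, Equiv.Perm.mul_apply, hinv1 a, ← hval0 a, hπ₀, Equiv.Perm.mul_apply, hinv0 a]
      by_cases h : τ.symm a ∈ s
      · rw [if_pos h, if_pos h]
        have := h
        rw [hsdef, flips, Finset.mem_filter] at this
        exact this.2
      · rw [if_neg h, if_neg h]
        have := h
        rw [hsdef, flips, Finset.mem_filter] at this
        push_neg at this
        exact lt_of_le_of_ne (this (Finset.mem_univ _)) (hpair_ne (τ.symm a))
    have hPp : Pplus f π₀ := by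
      constructor
      · have : (fun a : Fin m => f (π₀ (pos0 a))) = fun a => T.orderEmbOfFin hT a :=
          funext hval0
        rw [this]
        exact (T.orderEmbOfFin hT).strictMono
      · intro a
        rw [hval0 a]
        exact hval1 a
    refine ⟨⟨⟨π₀, hPp⟩, s, τ⟩, ?_⟩
    simp only [hπ₀]
    rw [inv_mul_cancel_right]

/-! ### Summation over the decomposition -/

lemma Vt_eq_card_smul {N m : ℕ} (f : Fin (2*m) → Fin N) (hf : Function.Injective f) :
    Vt f = (Fintype.card (Finset (Fin m) × Equiv.Perm (Fin m))) •
      ∑ π ∈ Finset.univ.filter (Pplus f), Fterm f π := by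
  classical
  rw [Vt]
  rw [← Fintype.sum_bijective _ (decomp_bijective f hf)
    (fun x => Fterm f (x.1.1 * theta x.2.1 x.2.2)) (Fterm f) (fun x => rfl)]
  rw [Fintype.sum_prod_type]
  have hinner : ∀ π₀ : {π : Equiv.Perm (Fin (2*m)) // Pplus f π},
      ∑ h : Finset (Fin m) × Equiv.Perm (Fin m), Fterm f (π₀.1 * theta h.1 h.2)
        = (Fintype.card (Finset (Fin m) × Equiv.Perm (Fin m))) • Fterm f π₀.1 := by
    intro π₀
    rw [Finset.sum_congr rfl (fun h _ => Fterm_mul_theta f hf π₀.1 h.1 h.2),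
      Finset.sum_const, Finset.card_univ]
  rw [Finset.sum_congr rfl (fun π₀ _ => hinner π₀), ← Finset.smul_sum]
  congr 1
  exact (Finset.sum_subtype _ (by simp) (Fterm f)).symm

/-! ### The reindexing cycle -/

lemma key_reindex {N n : ℕ} (I : Finset (Fin N)) (hI : I.card = n+1) (s t : Fin N)
    (hs : s ∈ I) (ht : t ∉ I) (hJ : (insert t (I.erase s)).card = n+1)
    (q r : Fin (n+1)) (hq : I.orderEmbOfFin hI q = s)
    (hr : (insert t (I.erase s)).orderEmbOfFin hJ r = t) :
    ∃ c : Equiv.Perm (Fin (n+1)),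
      Equiv.Perm.sign c = (-1 : ℤˣ)^((q : ℕ)+(r : ℕ)) ∧
      Function.update (fun a => I.orderEmbOfFin hI a) q t
        = (fun a => (insert t (I.erase s)).orderEmbOfFin hJ a) ∘ ⇑c := by
  have hK : (I.erase s).card = n := by
    rw [Finset.card_erase_of_mem hs, hI]
    omega
  have hJK : (insert t (I.erase s)).erase t = I.erase s :=
    Finset.erase_insert (fun hm => ht (Finset.mem_of_mem_erase hm))
  have hIe : (fun i : Fin n => I.orderEmbOfFin hI (q.succAbove i))
      = fun i => (I.erase s).orderEmbOfFin hK i := by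
    refine Finset.orderEmbOfFin_unique hK (fun i => Finset.mem_erase.mpr ⟨?_, ?_⟩) ?_
    · exact fun hh => Fin.succAbove_ne q i ((I.orderEmbOfFin hI).injective (hh.trans hq.symm))
    · exact Finset.orderEmbOfFin_mem I hI _
    · exact (I.orderEmbOfFin hI).strictMono.comp (Fin.strictMono_succAbove q)
  have hJe : (fun i : Fin n => (insert t (I.erase s)).orderEmbOfFin hJ (r.succAbove i))
      = fun i => (I.erase s).orderEmbOfFin hK i := by
    refine Finset.orderEmbOfFin_unique hK (fun i => ?_) ?_
    · have hmem : (insert t (I.erase s)).orderEmbOfFin hJ (r.succAbove i)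
          ∈ (insert t (I.erase s)).erase t := by
        refine Finset.mem_erase.mpr ⟨?_, ?_⟩
        · exact fun hh => Fin.succAbove_ne r i
            (((insert t (I.erase s)).orderEmbOfFin hJ).injective (hh.trans hr.symm))
        · exact Finset.orderEmbOfFin_mem _ hJ _
      rwa [hJK] at hmem
    · exact ((insert t (I.erase s)).orderEmbOfFin hJ).strictMono.comp
        (Fin.strictMono_succAbove r)
  refine ⟨(Fin.cycleRange r)⁻¹ * Fin.cycleRange q, ?_, ?_⟩
  · rw [map_mul, map_inv, Fin.sign_cycleRange, Fin.sign_cycleRange]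
    have h1 : ((-1 : ℤˣ)^(r : ℕ))⁻¹ = (-1 : ℤˣ)^(r : ℕ) := by
      rcases Int.units_eq_one_or ((-1 : ℤˣ)^(r : ℕ)) with h | h <;> rw [h] <;> decide
    rw [h1, pow_add]
    exact mul_comm _ _
  · funext x
    rw [Function.comp_apply]
    by_cases hx : x = q
    · have hcq : ((Fin.cycleRange r)⁻¹ * Fin.cycleRange q) q = r := by
        rw [Equiv.Perm.mul_apply, Fin.cycleRange_self, Equiv.Perm.inv_def,
          Fin.cycleRange_symm_zero]
      rw [hx, Function.update_self, hcq, hr]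
    · rcases Fin.exists_succAbove_eq hx with ⟨i, rfl⟩
      rw [Function.update_of_ne hx]
      have hci : ((Fin.cycleRange r)⁻¹ * Fin.cycleRange q) (q.succAbove i) = r.succAbove i := by
        rw [Equiv.Perm.mul_apply, Fin.cycleRange_succAbove, Equiv.Perm.inv_def,
          Fin.cycleRange_symm_succ]
      rw [hci]
      exact (congrFun hIe i).trans (congrFun hJe i).symm

end PfAux

set_option maxHeartbeats 1000000 in
set_option synthInstance.maxHeartbeats 400000 in
open SOC in
/-- Commutation of Pfaffian-type elements with generators, mixed case (Lemma 2-3(2)). -/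
theorem pfaffian_commute_generator_mixed
    (N p : ℕ) (hN : 3 ≤ N) (hpN : 2*p + 2 ≤ N)
    (I : Finset (Fin N)) (hI : I.card = 2*(p+1)) (s t : Fin N) (hst : s ≠ t)
    (hs : s ∈ I) (ht : t ∉ I)
    (hJ : (insert t (I.erase s)).card = 2*(p+1))
    (q r : Fin (2*(p+1)))
    (hq : I.orderEmbOfFin hI q = s)
    (hr : (insert t (I.erase s)).orderEmbOfFin hJ r = t) :
    Wt N (p+1) I * ι (Xt s t) =
      ι (Xt s t) * Wt N (p+1) I -
        ((-1 : ℤ)^((q : ℕ) + (r : ℕ))) • Wt N (p+1) (insert t (I.erase s)) := by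
  classical
  have hfinj : Function.Injective (fun a => I.orderEmbOfFin hI a) :=
    fun a b h => (I.orderEmbOfFin hI).injective h
  have hfJinj : Function.Injective (fun a => (insert t (I.erase s)).orderEmbOfFin hJ a) :=
    fun a b h => ((insert t (I.erase s)).orderEmbOfFin hJ).injective h
  have htf : ∀ x, (fun a => I.orderEmbOfFin hI a) x ≠ t :=
    fun x hx => ht (hx ▸ Finset.orderEmbOfFin_mem I hI x)
  have hcomm := Vt_comm (fun a => I.orderEmbOfFin hI a) hfinj q t htf
  simp only [hq] at hcomm
  obtain ⟨c, hsign, hupd⟩ :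
      ∃ c : Equiv.Perm (Fin (2*(p+1))),
        Equiv.Perm.sign c = (-1 : ℤˣ)^((q : ℕ)+(r : ℕ)) ∧
        Function.update (fun a => I.orderEmbOfFin hI a) q t
          = (fun a => (insert t (I.erase s)).orderEmbOfFin hJ a) ∘ ⇑c :=
    key_reindex (n := 2*p+1) I hI s t hs ht hJ q r hq hr
  have hVup : Vt (Function.update (fun a => I.orderEmbOfFin hI a) q t)
      = ((-1 : ℤ)^((q : ℕ)+(r : ℕ))) •
        Vt (fun a => (insert t (I.erase s)).orderEmbOfFin hJ a) := by
    rw [hupd, Vt_comp_perm (fun a => (insert t (I.erase s)).orderEmbOfFin hJ a) c]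
    congr 1
    rw [hsign, Units.val_pow_eq_pow_val]
    simp
  have hVI : Vt (fun a => I.orderEmbOfFin hI a)
      = (Fintype.card (Finset (Fin (p+1)) × Equiv.Perm (Fin (p+1)))) • Wt N (p+1) I := by
    rw [Wt_eq I hI]
    exact Vt_eq_card_smul _ hfinj
  have hVJ : Vt (fun a => (insert t (I.erase s)).orderEmbOfFin hJ a)
      = (Fintype.card (Finset (Fin (p+1)) × Equiv.Perm (Fin (p+1)))) •
        Wt N (p+1) (insert t (I.erase s)) := by
    rw [Wt_eq _ hJ]
    exact Vt_eq_card_smul _ hfJinj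
  set K : ℕ := Fintype.card (Finset (Fin (p+1)) × Equiv.Perm (Fin (p+1))) with hKdef
  have hK0 : (K : ℂ) ≠ 0 := Nat.cast_ne_zero.mpr Fintype.card_ne_zero
  rw [hVup, hVI, hVJ] at hcomm
  rw [← Nat.cast_smul_eq_nsmul ℂ K (Wt N (p+1) I),
    ← Nat.cast_smul_eq_nsmul ℂ K (Wt N (p+1) (insert t (I.erase s)))] at hcomm
  rw [← Int.cast_smul_eq_zsmul ℂ ((-1 : ℤ)^((q : ℕ)+(r : ℕ)))] at hcomm ⊢
  -- cancel the nonzero scalar K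
  have hinj : ∀ u v : U N, (K : ℂ) • u = (K : ℂ) • v → u = v := by
    intro u v h
    have h2 := congrArg (fun w => ((K : ℂ))⁻¹ • w) h
    simpa [inv_smul_smul₀ hK0] using h2
  apply hinj
  rw [smul_sub, ← smul_mul_assoc, ← mul_smul_comm]
  rw [smul_smul, mul_comm ((K : ℂ)) ((((-1 : ℤ)^((q : ℕ)+(r : ℕ)) : ℤ) : ℂ)), ← smul_smul]
  have h2 := hcomm
  rw [sub_eq_iff_eq_add, neg_add_eq_sub] at h2
  exact h2
end
end

section
/- Harish-Chandra reduction of the Casimir-type element (Proposition 2-11(1)): Let N ≥ 3 and set W̃₁ := Σ_{1 ≤ i < j ≤ N} ι(X̃_{ij})² ∈ U(𝔰𝔬(N,ℂ)). Then W̃₁ + Σ_{1 ≤ l ≤ ⌊N/2⌋} (√−1·ι(X̃_{l,N+1−l}))·(√−1·ι(X̃_{l,N+1−l}) − (N−2l)) ∈ ñ(0)·U. -/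
open scoped Classical Matrix

set_option maxHeartbeats 1000000
set_option synthInstance.maxHeartbeats 400000

attribute [local instance 100] LieRing.ofAssociativeRing

noncomputable section

namespace SOC

lemma Xt_bracket {N : ℕ} (i j k : Fin N) (hij : i ≠ j) (hjk : j ≠ k) (hik : i ≠ k) :
    ⁅Xt i j, Xt j k⁆ = -(Xt i k) := by
  apply Subtype.ext
  show ⁅((Xt i j : so N) : Matrix (Fin N) (Fin N) ℂ), ((Xt j k : so N) : Matrix (Fin N) (Fin N) ℂ)⁆ = _
  rw [Ring.lie_def]
  show (Matrix.single j i 1 - Matrix.single i j 1) *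
      (Matrix.single k j 1 - Matrix.single j k 1) -
      (Matrix.single k j 1 - Matrix.single j k 1) *
      (Matrix.single j i 1 - Matrix.single i j 1) =
      -(Matrix.single k i 1 - Matrix.single i k 1)
  rw [sub_mul, sub_mul, mul_sub, mul_sub, mul_sub, mul_sub]
  rw [Matrix.single_mul_single_of_ne (h := hik.symm),
      Matrix.single_mul_single_of_ne (h := hij.symm),
      Matrix.single_mul_single_of_ne (h := hjk),
      Matrix.single_mul_single_same,
      Matrix.single_mul_single_same,
      Matrix.single_mul_single_of_ne (h := hij),
      Matrix.single_mul_single_of_ne (h := hik),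
      Matrix.single_mul_single_of_ne (h := hjk.symm)]
  simp only [mul_one]
  abel

lemma comm_U {N : ℕ} (x y : so N) : ι x * ι y = ι y * ι x + ι ⁅x, y⁆ := by
  have := (UniversalEnvelopingAlgebra.ι ℂ (L := so N)).map_lie x y
  rw [Ring.lie_def] at this
  simp only [ι]
  rw [this]; abel

lemma ι_smul {N : ℕ} (c : ℂ) (x : so N) : ι (c • x) = c • ι x :=
  (UniversalEnvelopingAlgebra.ι ℂ (L := so N)).toLinearMap.map_smul c x

lemma ι_add {N : ℕ} (x y : so N) : ι (x + y) = ι x + ι y :=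
  (UniversalEnvelopingAlgebra.ι ℂ (L := so N)).toLinearMap.map_add x y

lemma key {N : ℕ} (q l : Fin N) (h1 : q < l) (h2 : l < q.rev) :
    ι (Xt q l) ^ 2 + ι (Xt l q.rev) ^ 2 =
      ι (Ntl q l) * (ι (Xt l q.rev) - Complex.I • ι (Xt q l))
        + Complex.I • ι (Xt q q.rev) := by
  have hql : q ≠ l := h1.ne
  have hlr : l ≠ q.rev := h2.ne
  have hqr : q ≠ q.rev := (h1.trans h2).ne
  have hb : ⁅Xt q l, Xt l q.rev⁆ = -(Xt q q.rev) := Xt_bracket q l q.rev hql hlr hqr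
  have hc : ι (Xt q l) * ι (Xt l q.rev)
      = ι (Xt l q.rev) * ι (Xt q l) + (- ι (Xt q q.rev)) := by
    rw [comm_U, hb]
    congr 1
    exact (UniversalEnvelopingAlgebra.ι ℂ (L := so N)).toLinearMap.map_neg _
  rw [Ntl, ι_add, ι_smul]
  set A := ι (Xt l q.rev)
  set B := ι (Xt q l)
  set C := ι (Xt q q.rev)
  have hc' : B * A = A * B + -C := hc
  rw [add_mul, mul_sub, mul_sub, smul_mul_assoc, smul_mul_assoc, mul_smul_comm, mul_smul_comm,
      hc', smul_add, smul_smul, Complex.I_mul_I, pow_two, pow_two]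
  module

end SOC

open SOC in
theorem casimir_main_eq (N : ℕ) (hN : 3 ≤ N) :
    (∑ ij ∈ Finset.univ.filter (fun ij : Fin N × Fin N => ij.1 < ij.2),
        (ι (Xt ij.1 ij.2))^2) +
      ∑ l ∈ Finset.univ.filter (fun l : Fin N => (l : ℕ) < N/2),
        (Complex.I • ι (Xt l l.rev)) *
          (Complex.I • ι (Xt l l.rev) - ((N : ℂ) - 2*((l : ℕ)+1)) • 1)
    = ∑ ij ∈ Finset.univ.filter
        (fun ij : Fin N × Fin N => ij.1 < ij.2 ∧ ij.2 < ij.1.rev),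
        ι (Ntl ij.1 ij.2) * (ι (Xt ij.2 ij.1.rev) - Complex.I • ι (Xt ij.1 ij.2)) := by
  classical
  set T := Finset.univ.filter
      (fun ij : Fin N × Fin N => ij.1 < ij.2 ∧ ij.2 < ij.1.rev) with hT
  -- Step A : split the first sum into three pieces
  have h1 := Finset.sum_filter_add_sum_filter_not
      (Finset.univ.filter (fun ij : Fin N × Fin N => ij.1 < ij.2))
      (fun ij => ij.2 < ij.1.rev) (fun ij => (ι (Xt ij.1 ij.2))^2)
  have h2 := Finset.sum_filter_add_sum_filter_not
      ((Finset.univ.filter (fun ij : Fin N × Fin N => ij.1 < ij.2)).filter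
        (fun ij => ¬ ij.2 < ij.1.rev))
      (fun ij => ij.1.rev < ij.2) (fun ij => (ι (Xt ij.1 ij.2))^2)
  rw [Finset.filter_filter] at h1
  rw [Finset.filter_filter, Finset.filter_filter, Finset.filter_filter] at h2
  -- part 3 : i.rev < j, reindex (i,j) ↦ (j.rev, i)
  have e3 : ∑ ij ∈ Finset.univ.filter
        (fun ij : Fin N × Fin N => ij.1 < ij.2 ∧ ¬ ij.2 < ij.1.rev ∧ ij.1.rev < ij.2),
        (ι (Xt ij.1 ij.2))^2
      = ∑ ij ∈ T, (ι (Xt ij.2 ij.1.rev))^2 := by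
    refine Finset.sum_nbij' (fun ij => (ij.2.rev, ij.1)) (fun ql => (ql.2, ql.1.rev))
      ?_ ?_ ?_ ?_ ?_
    · intro a ha
      have b1 := a.1.isLt; have b2 := a.2.isLt
      simp only [hT, Finset.mem_filter, Finset.mem_univ, true_and, Fin.lt_def,
        Fin.val_rev] at ha ⊢
      omega
    · intro a ha
      have b1 := a.1.isLt; have b2 := a.2.isLt
      simp only [hT, Finset.mem_filter, Finset.mem_univ, true_and, Fin.lt_def,
        Fin.val_rev] at ha ⊢
      omega
    · intro a _; simp [Fin.rev_rev]
    · intro a _; simp [Fin.rev_rev]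
    · intro a _; simp [Fin.rev_rev]
  -- part 2 : the Cartan part
  have e2 : ∑ ij ∈ (Finset.univ.filter (fun ij : Fin N × Fin N => ij.1 < ij.2)).filter
        (fun ij : Fin N × Fin N => ¬ ij.2 < ij.1.rev ∧ ¬ ij.1.rev < ij.2),
        (ι (Xt ij.1 ij.2))^2
      = ∑ l ∈ Finset.univ.filter (fun l : Fin N => (l : ℕ) < N/2),
        (ι (Xt l l.rev))^2 := by
    refine Finset.sum_nbij' (fun ij => ij.1) (fun l => (l, l.rev)) ?_ ?_ ?_ ?_ ?_
    · intro a ha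
      have b1 := a.1.isLt; have b2 := a.2.isLt
      simp only [Finset.mem_filter, Finset.mem_univ, true_and, Fin.lt_def,
        Fin.val_rev] at ha ⊢
      omega
    · intro a ha
      have b1 := a.isLt
      simp only [Finset.mem_filter, Finset.mem_univ, true_and, Fin.lt_def,
        Fin.val_rev] at ha ⊢
      omega
    · intro a ha
      have b1 := a.1.isLt; have b2 := a.2.isLt
      simp only [Finset.mem_filter, Finset.mem_univ, true_and, Fin.lt_def,
        Fin.val_rev] at ha
      refine Prod.ext rfl (Fin.ext ?_)
      simp only [Fin.val_rev]
      omega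
    · intro a _; rfl
    · intro a ha
      have b1 := a.1.isLt; have b2 := a.2.isLt
      simp only [Finset.mem_filter, Finset.mem_univ, true_and, Fin.lt_def,
        Fin.val_rev] at ha
      have : a.2 = a.1.rev := by
        refine Fin.ext ?_; simp only [Fin.val_rev]; omega
      rw [this]
  -- step B : key identity on T
  have eB : ∑ ij ∈ T, ((ι (Xt ij.1 ij.2))^2 + (ι (Xt ij.2 ij.1.rev))^2)
      = (∑ ij ∈ T, ι (Ntl ij.1 ij.2) * (ι (Xt ij.2 ij.1.rev) - Complex.I • ι (Xt ij.1 ij.2)))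
        + ∑ ij ∈ T, Complex.I • ι (Xt ij.1 ij.1.rev) := by
    rw [← Finset.sum_add_distrib]
    refine Finset.sum_congr rfl ?_
    intro ij hij
    simp only [hT, Finset.mem_filter, Finset.mem_univ, true_and] at hij
    exact key ij.1 ij.2 hij.1 hij.2
  -- step C : counting
  have eC : ∑ ij ∈ T, Complex.I • ι (Xt ij.1 ij.1.rev)
      = ∑ l ∈ Finset.univ.filter (fun l : Fin N => (l : ℕ) < N/2),
        ((N - 2 - 2*(l : ℕ) : ℕ)) • (Complex.I • ι (Xt l l.rev)) := by
    rw [hT, Finset.sum_filter, Fintype.sum_prod_type]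
    have hq : ∀ q : Fin N,
        (∑ l : Fin N, if q < l ∧ l < q.rev then Complex.I • ι (Xt q q.rev) else 0)
        = ((N - 2 - 2*(q : ℕ) : ℕ)) • (Complex.I • ι (Xt q q.rev)) := by
      intro q
      rw [← Finset.sum_filter, Finset.sum_const]
      congr 1
      have hs : Finset.univ.filter (fun l : Fin N => q < l ∧ l < q.rev)
          = Finset.Ioo q q.rev := by
        ext l; simp [Finset.mem_Ioo]
      rw [hs]
      have b1 := q.isLt
      have hcard : (Finset.Ioo q q.rev).card = (q.rev : ℕ) - (q : ℕ) - 1 := by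
        simp [Fin.card_Ioo]
      rw [hcard, Fin.val_rev]
      omega
    rw [Finset.sum_congr rfl (fun q _ => hq q)]
    refine (Finset.sum_filter_of_ne ?_).symm
    intro q _ h
    by_contra hq2
    apply h
    have b1 := q.isLt
    have : N - 2 - 2*(q : ℕ) = 0 := by omega
    rw [this, zero_smul]
  -- termwise cancellation of the Cartan contributions
  have hterm : ∀ l : Fin N, (l : ℕ) < N/2 →
      ((N - 2 - 2*(l : ℕ) : ℕ)) • (Complex.I • ι (Xt l l.rev))
        + ((ι (Xt l l.rev))^2
          + (Complex.I • ι (Xt l l.rev)) *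
              (Complex.I • ι (Xt l l.rev) - ((N : ℂ) - 2*((l : ℕ)+1)) • 1)) = 0 := by
    intro l hl
    have b1 := l.isLt
    have hcast : ((N - 2 - 2*(l : ℕ) : ℕ) : ℂ) = (N : ℂ) - 2*((l : ℕ)+1) := by
      have h' : (N - 2 - 2*(l : ℕ) : ℕ) = N - (2 + 2*(l : ℕ)) := by omega
      rw [h', Nat.cast_sub (by omega)]
      push_cast; ring
    rw [← Nat.cast_smul_eq_nsmul ℂ, hcast]
    set A := ι (Xt l l.rev)
    set c := (N : ℂ) - 2*((l : ℕ)+1)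
    rw [mul_sub, smul_mul_assoc, smul_mul_assoc, mul_smul_comm, mul_smul_comm,
      smul_smul, smul_smul, Complex.I_mul_I, mul_one, pow_two]
    module
  -- assemble
  rw [← h1, ← h2, e3, e2]
  have hz : ∑ l ∈ Finset.univ.filter (fun l : Fin N => (l : ℕ) < N/2),
      (((N - 2 - 2*(l : ℕ) : ℕ)) • (Complex.I • ι (Xt l l.rev))
        + ((ι (Xt l l.rev))^2
          + (Complex.I • ι (Xt l l.rev)) *
              (Complex.I • ι (Xt l l.rev) - ((N : ℂ) - 2*((l : ℕ)+1)) • 1))) = 0 := by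
    refine Finset.sum_eq_zero ?_
    intro l hl
    simp only [Finset.mem_filter, Finset.mem_univ, true_and] at hl
    exact hterm l hl
  have hre : ∀ a b c d : U N, a + (b + c) + d = (a + b) + (c + d) := fun a b c d => by abel
  rw [hre]
  rw [← Finset.sum_add_distrib]
  rw [← Finset.sum_add_distrib]
  rw [eB]
  rw [add_assoc]
  rw [eC]
  rw [← Finset.sum_add_distrib]
  rw [hz]
  rw [add_zero]

open SOC in
/-- Harish-Chandra reduction of the Casimir-type element (Proposition 2-11(1)). -/
theorem casimir_mod_n0
    (N : ℕ) (hN : 3 ≤ N) :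
    (∑ ij ∈ Finset.univ.filter (fun ij : Fin N × Fin N => ij.1 < ij.2),
        (ι (Xt ij.1 ij.2))^2) +
      ∑ l ∈ Finset.univ.filter (fun l : Fin N => (l : ℕ) < N/2),
        (Complex.I • ι (Xt l l.rev)) *
          (Complex.I • ι (Xt l l.rev) - ((N : ℂ) - 2*((l : ℕ)+1)) • 1)
      ∈ nUs N (N/2) := by
  rw [casimir_main_eq N hN]
  refine Submodule.sum_mem _ ?_
  intro ij hij
  simp only [Finset.mem_filter, Finset.mem_univ, true_and] at hij
  apply Submodule.subset_span
  refine ⟨ij.1, ?_, Ntl ij.1 ij.2, Submodule.subset_span ⟨ij.2, hij.1, hij.2, rfl⟩, _, rfl⟩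
  have b1 := ij.1.isLt; have b2 := ij.2.isLt
  have h1 : (ij.1 : ℕ) < (ij.2 : ℕ) := hij.1
  have h2 : (ij.2 : ℕ) < (ij.1.rev : ℕ) := hij.2
  rw [Fin.val_rev] at h2
  omega
end
end
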